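/- arXiv:2406.03704 — 4 statements merged into one kernel-verified Lean document; each statement's English description precedes it below -/
import Mathlib

section
/- The ray mapping g, restricted to A, is a bijection from A onto A^r. -/
open Set Classical

/-- The ray mapping `g` from the action space `A` to the relevant action set `Aʳ`:
`g(c) = c`, and for `a ≠ c`,
`g(a) = c + (gauge_{A−c}(a−c) / gauge_{Aʳ−c}(a−c)) • (a−c)`. -/
noncomputable def rayMap {N : ℕ} (A Ar : Set (EuclideanSpace ℝ (Fin N)))
    (c : EuclideanSpace ℝ (Fin N)) (a : EuclideanSpace ℝ (Fin N)) :
    EuclideanSpace ℝ (Fin N) :=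
  if a = c then c
  else c + (gauge ((· - c) '' A) (a - c) / gauge ((· - c) '' Ar) (a - c)) • (a - c)

lemma rayMap_eq_gaugeRescale {N : ℕ} (A Ar : Set (EuclideanSpace ℝ (Fin N)))
    (c a : EuclideanSpace ℝ (Fin N)) :
    rayMap A Ar c a = c + gaugeRescale ((· - c) '' A) ((· - c) '' Ar) (a - c) := by
  unfold rayMap gaugeRescale
  by_cases h : a = c
  · simp [h]
  · simp [h]

/-- The ray mapping `g`, restricted to `A`, is a bijection from `A` onto `Aʳ`. -/
theorem rayMap_bijOn {N : ℕ} (hN : 1 ≤ N)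
    (A Ar : Set (EuclideanSpace ℝ (Fin N)))
    (hAcomp : IsCompact A) (hAconv : Convex ℝ A)
    (hArcomp : IsCompact Ar) (hArconv : Convex ℝ Ar)
    (hsub : Ar ⊆ A) (c : EuclideanSpace ℝ (Fin N)) (hc : c ∈ interior Ar) :
    Set.BijOn (rayMap A Ar c) A Ar := by
  set B : Set (EuclideanSpace ℝ (Fin N)) := (· - c) '' A with hB
  set Br : Set (EuclideanSpace ℝ (Fin N)) := (· - c) '' Ar with hBr
  have hcA : c ∈ interior A := interior_mono hsub hc
  -- translation as a homeomorphism
  have hBeq : B = Homeomorph.subRight c '' A := rfl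
  have hBreq : Br = Homeomorph.subRight c '' Ar := rfl
  have hBcomp : IsCompact B := hAcomp.image (Homeomorph.subRight c).continuous
  have hBrcomp : IsCompact Br := hArcomp.image (Homeomorph.subRight c).continuous
  have hsubeq : (fun x : EuclideanSpace ℝ (Fin N) => x - c) = (fun x => -c + x) :=
    funext fun x => by rw [sub_eq_neg_add]
  have hBconv : Convex ℝ B := by
    rw [hB, hsubeq]; exact hAconv.translate (-c)
  have hBrconv : Convex ℝ Br := by
    rw [hBr, hsubeq]; exact hArconv.translate (-c)
  have hB0 : B ∈ nhds (0 : EuclideanSpace ℝ (Fin N)) := by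
    have : (0 : EuclideanSpace ℝ (Fin N)) ∈ interior B := by
      rw [hBeq, ← Homeomorph.image_interior]
      exact ⟨c, hcA, by simp⟩
    exact mem_interior_iff_mem_nhds.1 this
  have hBr0 : Br ∈ nhds (0 : EuclideanSpace ℝ (Fin N)) := by
    have : (0 : EuclideanSpace ℝ (Fin N)) ∈ interior Br := by
      rw [hBreq, ← Homeomorph.image_interior]
      exact ⟨c, hc, by simp⟩
    exact mem_interior_iff_mem_nhds.1 this
  have hBb : Bornology.IsVonNBounded ℝ B :=
    NormedSpace.isVonNBounded_of_isBounded _ hBcomp.isBounded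
  have hBrb : Bornology.IsVonNBounded ℝ Br :=
    NormedSpace.isVonNBounded_of_isBounded _ hBrcomp.isBounded
  -- the gauge rescale homeomorphism
  set φ := gaugeRescaleHomeomorph B Br hBconv hB0 hBb hBrconv hBr0 hBrb with hφ
  have himg : φ '' B = Br := by
    have := image_gaugeRescaleHomeomorph_closure hBconv hB0 hBb hBrconv hBr0 hBrb
    rwa [hBcomp.isClosed.closure_eq, hBrcomp.isClosed.closure_eq] at this
  have hbij : Set.BijOn (gaugeRescale B Br) B Br := by
    have : Set.BijOn (φ : EuclideanSpace ℝ (Fin N) → EuclideanSpace ℝ (Fin N)) B Br := by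
      rw [← himg]
      exact (φ.injective.injOn).bijOn_image
    exact this
  -- rayMap = (c + ·) ∘ gaugeRescale B Br ∘ (· - c)
  have hcomp : ∀ a, rayMap A Ar c a =
      ((c + ·) ∘ gaugeRescale B Br ∘ (· - c)) a := fun a =>
    rayMap_eq_gaugeRescale A Ar c a
  have hsubbij : Set.BijOn (· - c) A B := (sub_left_injective.injOn).bijOn_image
  have haddbij : Set.BijOn (c + ·) Br Ar := by
    have : (c + ·) '' Br = Ar := by
      rw [hBr, Set.image_image]
      simp
    rw [← this]
    exact (add_right_injective c).injOn.bijOn_image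
  have := (haddbij.comp hbij).comp hsubbij
  exact Set.BijOn.congr this (fun a _ => (hcomp a).symm)
end

section
/- The ray mapping g is injective on A: for all a₁, a₂ ∈ A, if a₁ ≠ a₂ then g(a₁) ≠ g(a₂). -/
open Set Classical

lemma gauge_img_pos {N : ℕ} {S : Set (EuclideanSpace ℝ (Fin N))}
    (hcomp : IsCompact S) {c x : EuclideanSpace ℝ (Fin N)}
    (hc : c ∈ interior S) (hx : x ≠ 0) : 0 < gauge ((· - c) '' S) x := by
  have habs : Absorbent ℝ ((· - c) '' S) := by
    apply absorbent_nhds_zero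
    have : (0 : EuclideanSpace ℝ (Fin N)) ∈ interior ((· - c) '' S) := by
      have h := (Homeomorph.subRight c).image_interior S
      show (0 : EuclideanSpace ℝ (Fin N)) ∈ interior (⇑(Homeomorph.subRight c) '' S)
      rw [← h]
      exact ⟨c, hc, by simp⟩
    exact mem_interior_iff_mem_nhds.mp this
  have hbdd : Bornology.IsVonNBounded ℝ ((· - c) '' S) := by
    apply NormedSpace.isVonNBounded_of_isBounded
    exact ((hcomp.image (continuous_id.sub continuous_const)).isBounded)
  exact (gauge_pos habs hbdd).mpr hx

lemma gauge_img_smul {N : ℕ} (S : Set (EuclideanSpace ℝ (Fin N)))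
    (c : EuclideanSpace ℝ (Fin N)) {t : ℝ} (ht : 0 ≤ t) (x : EuclideanSpace ℝ (Fin N)) :
    gauge ((· - c) '' S) (t • x) = t * gauge ((· - c) '' S) x := by
  rw [gauge_smul_of_nonneg ht, smul_eq_mul]

/-- The ray mapping `g` is injective on `A`:
for all `a₁, a₂ ∈ A`, if `a₁ ≠ a₂` then `g(a₁) ≠ g(a₂)`. -/
theorem rayMap_injective {N : ℕ} (hN : 1 ≤ N)
    (A Ar : Set (EuclideanSpace ℝ (Fin N)))
    (hAcomp : IsCompact A) (hAconv : Convex ℝ A)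
    (hArcomp : IsCompact Ar) (hArconv : Convex ℝ Ar)
    (hsub : Ar ⊆ A) (c : EuclideanSpace ℝ (Fin N)) (hc : c ∈ interior Ar) :
    ∀ a₁ ∈ A, ∀ a₂ ∈ A, a₁ ≠ a₂ → rayMap A Ar c a₁ ≠ rayMap A Ar c a₂ := by
  have hcA : c ∈ interior A := interior_mono hsub hc
  -- positivity of the ratio for any point different from c
  have hr_pos : ∀ a : EuclideanSpace ℝ (Fin N), a ≠ c →
      0 < gauge ((· - c) '' A) (a - c) / gauge ((· - c) '' Ar) (a - c) := by
    intro a ha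
    have hx : a - c ≠ 0 := sub_ne_zero.mpr ha
    exact div_pos (gauge_img_pos hAcomp hcA hx) (gauge_img_pos hArcomp hc hx)
  intro a₁ _ a₂ _ hne heq
  unfold rayMap at heq
  by_cases h1 : a₁ = c <;> by_cases h2 : a₂ = c
  · exact hne (h1.trans h2.symm)
  · rw [if_pos h1, if_neg h2] at heq
    have : (gauge ((· - c) '' A) (a₂ - c) / gauge ((· - c) '' Ar) (a₂ - c)) • (a₂ - c) = 0 := by
      have := heq.symm
      rwa [add_eq_left] at this
    rcases smul_eq_zero.mp this with h | h
    · exact absurd h (ne_of_gt (hr_pos a₂ h2))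
    · exact h2 (sub_eq_zero.mp h)
  · rw [if_neg h1, if_pos h2] at heq
    have : (gauge ((· - c) '' A) (a₁ - c) / gauge ((· - c) '' Ar) (a₁ - c)) • (a₁ - c) = 0 := by
      rwa [add_eq_left] at heq
    rcases smul_eq_zero.mp this with h | h
    · exact absurd h (ne_of_gt (hr_pos a₁ h1))
    · exact h1 (sub_eq_zero.mp h)
  · rw [if_neg h1, if_neg h2] at heq
    set r₁ := gauge ((· - c) '' A) (a₁ - c) / gauge ((· - c) '' Ar) (a₁ - c) with hr₁
    set r₂ := gauge ((· - c) '' A) (a₂ - c) / gauge ((· - c) '' Ar) (a₂ - c) with hr₂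
    have hr₁pos : 0 < r₁ := hr_pos a₁ h1
    have hr₂pos : 0 < r₂ := hr_pos a₂ h2
    have hkey : r₁ • (a₁ - c) = r₂ • (a₂ - c) := by
      have := add_left_cancel heq
      exact this
    -- a₂ - c = (r₁/r₂) • (a₁ - c)
    have ht : a₂ - c = (r₁ / r₂) • (a₁ - c) := by
      have h := congrArg (fun v => r₂⁻¹ • v) hkey
      simp only [smul_smul, inv_mul_cancel₀ (ne_of_gt hr₂pos), one_smul] at h
      rw [← h, div_eq_inv_mul]
    have htpos : (0:ℝ) < r₁ / r₂ := div_pos hr₁pos hr₂pos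
    -- homogeneity implies r₂ = r₁
    have hgA : gauge ((· - c) '' A) (a₂ - c) = (r₁ / r₂) * gauge ((· - c) '' A) (a₁ - c) := by
      rw [ht, gauge_img_smul A c htpos.le]
    have hgAr : gauge ((· - c) '' Ar) (a₂ - c) = (r₁ / r₂) * gauge ((· - c) '' Ar) (a₁ - c) := by
      rw [ht, gauge_img_smul Ar c htpos.le]
    have hx1 : a₁ - c ≠ 0 := sub_ne_zero.mpr h1
    have hAr1pos : 0 < gauge ((· - c) '' Ar) (a₁ - c) := gauge_img_pos hArcomp hc hx1
    have hreq : r₂ = r₁ := by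
      rw [hr₂, hgA, hgAr, mul_div_mul_left _ _ (ne_of_gt htpos)]
    rw [hreq] at hkey
    have : a₁ - c = a₂ - c := smul_right_injective _ (ne_of_gt hr₁pos) hkey
    exact hne (by linear_combination (norm := module) this)
end

section
/- For every a ∈ ℝ^N, gauge_{A^r−c}(g(a)−c) = gauge_{A−c}(a−c); in particular, g maps A into A^r, so the ray mask always outputs an action in the relevant action set. -/
open Set Classical

/-- For every `a ∈ ℝ^N`, `gauge_{Aʳ−c}(g(a)−c) = gauge_{A−c}(a−c)`;
in particular, `g` maps `A` into `Aʳ`. -/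
theorem rayMap_gauge_eq {N : ℕ} (hN : 1 ≤ N)
    (A Ar : Set (EuclideanSpace ℝ (Fin N)))
    (hAcomp : IsCompact A) (hAconv : Convex ℝ A)
    (hArcomp : IsCompact Ar) (hArconv : Convex ℝ Ar)
    (hsub : Ar ⊆ A) (c : EuclideanSpace ℝ (Fin N)) (hc : c ∈ interior Ar) :
    (∀ a : EuclideanSpace ℝ (Fin N),
        gauge ((· - c) '' Ar) (rayMap A Ar c a - c) = gauge ((· - c) '' A) (a - c)) ∧
      (∀ a ∈ A, rayMap A Ar c a ∈ Ar) := by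
  set Br : Set (EuclideanSpace ℝ (Fin N)) := (· - c) '' Ar with hBr
  set B : Set (EuclideanSpace ℝ (Fin N)) := (· - c) '' A with hB
  -- translation facts
  have himg : ∀ s : Set (EuclideanSpace ℝ (Fin N)),
      (· - c) '' s = (fun x => -c + x) '' s := by
    intro s; ext x; simp [sub_eq_neg_add]
  have hBrconv : Convex ℝ Br := by
    rw [hBr, himg]; exact hArconv.translate (-c)
  have homeo : ∀ s : Set (EuclideanSpace ℝ (Fin N)),
      (· - c) '' s = (Homeomorph.addRight (-c)) '' s := by
    intro s; ext x; simp [sub_eq_add_neg]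
  have hBrint : (0 : EuclideanSpace ℝ (Fin N)) ∈ interior Br := by
    have : interior Br = (· - c) '' interior Ar := by
      rw [hBr, homeo, homeo, (Homeomorph.addRight (-c)).image_interior]
    rw [this]
    exact ⟨c, hc, sub_self c⟩
  have hBrnhds : Br ∈ nhds (0 : EuclideanSpace ℝ (Fin N)) :=
    Filter.mem_of_superset (isOpen_interior.mem_nhds hBrint) interior_subset
  have hBrabs : Absorbent ℝ Br := absorbent_nhds_zero hBrnhds
  have hBrcomp : IsCompact Br := by
    rw [hBr, homeo]
    exact hArcomp.image (Homeomorph.addRight (-c)).continuous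
  have hBrbdd : Bornology.IsVonNBounded ℝ Br :=
    NormedSpace.isVonNBounded_iff ℝ |>.2 hBrcomp.isBounded
  have hBrclosed : IsClosed Br := hBrcomp.isClosed
  have key : ∀ a : EuclideanSpace ℝ (Fin N),
      gauge Br (rayMap A Ar c a - c) = gauge B (a - c) := by
    intro a
    by_cases ha : a = c
    · simp [rayMap, ha, gauge_zero]
    · have hx : a - c ≠ 0 := sub_ne_zero.2 ha
      have hpos : 0 < gauge Br (a - c) := (gauge_pos hBrabs hBrbdd).2 hx
      have hnn : 0 ≤ gauge B (a - c) / gauge Br (a - c) :=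
        div_nonneg (gauge_nonneg _) (gauge_nonneg _)
      rw [rayMap, if_neg ha, add_sub_cancel_left, gauge_smul_of_nonneg hnn,
        smul_eq_mul, div_mul_cancel₀ _ hpos.ne']
  refine ⟨key, fun a ha => ?_⟩
  have h1 : gauge Br (rayMap A Ar c a - c) ≤ 1 := by
    rw [key a]
    exact gauge_le_one_of_mem ⟨a, ha, rfl⟩
  have h2 : rayMap A Ar c a - c ∈ Br := by
    have := (gauge_le_one_iff_mem_closure hBrconv hBrnhds).1 h1
    rwa [hBrclosed.closure_eq] at this
  obtain ⟨y, hy, hyy⟩ := h2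
  have : y = rayMap A Ar c a := sub_left_inj.mp hyy
  exact this ▸ hy
end

section
/- Let Z(c₁, G₁) and Z(c₂, G₂) be zonotopes in ℝ^N with G₁ ∈ ℝ^{N×P₁} and G₂ ∈ ℝ^{N×P₂}. Suppose there exist Γ ∈ ℝ^{P₂×P₁} and β ∈ ℝ^{P₂} such that G₁ = G₂ Γ, c₂ − c₁ = G₂ β, and for every row index i ∈ {1, …, P₂}, Σ_{j=1}^{P₁} |Γ_{i j}| + |β_i| ≤ 1. Then Z(c₁, G₁) ⊆ Z(c₂, G₂). -/
open Matrix

/-- The zonotope `Z(c, G) = { c + G β : ‖β‖_∞ ≤ 1 }` with center `c ∈ ℝ^N` and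
generator matrix `G ∈ ℝ^{N×ι}`. -/
def zonotope {N : ℕ} {ι : Type*} [Fintype ι] (c : Fin N → ℝ)
    (G : Matrix (Fin N) ι ℝ) : Set (Fin N → ℝ) :=
  { x | ∃ β : ι → ℝ, (∀ i, |β i| ≤ 1) ∧ x = c + G.mulVec β }

/-- Sufficient condition for zonotope containment: if `G₁ = G₂ Γ`, `c₂ − c₁ = G₂ β`,
and every row of `[Γ, β]` has absolute sum at most `1`, then
`Z(c₁, G₁) ⊆ Z(c₂, G₂)`. -/
theorem zonotope_containment {N P₁ P₂ : ℕ}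
    (c₁ c₂ : Fin N → ℝ)
    (G₁ : Matrix (Fin N) (Fin P₁) ℝ) (G₂ : Matrix (Fin N) (Fin P₂) ℝ)
    (Γ : Matrix (Fin P₂) (Fin P₁) ℝ) (β : Fin P₂ → ℝ)
    (hG : G₁ = G₂ * Γ)
    (hc : c₂ - c₁ = G₂.mulVec β)
    (hrow : ∀ i : Fin P₂, (∑ j : Fin P₁, |Γ i j|) + |β i| ≤ 1) :
    zonotope c₁ G₁ ⊆ zonotope c₂ G₂ := by
  rintro x ⟨b, hb, rfl⟩
  refine ⟨Γ.mulVec b - β, fun i => ?_, ?_⟩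
  · calc |(Γ.mulVec b - β) i| = |Γ.mulVec b i - β i| := rfl
      _ ≤ |Γ.mulVec b i| + |β i| := abs_sub _ _
      _ ≤ (∑ j, |Γ i j|) + |β i| := by
          gcongr
          calc |Γ.mulVec b i| = |∑ j, Γ i j * b j| := rfl
            _ ≤ ∑ j, |Γ i j * b j| := Finset.abs_sum_le_sum_abs _ _
            _ ≤ ∑ j, |Γ i j| := by
                refine Finset.sum_le_sum fun j _ => ?_
                rw [abs_mul]
                exact mul_le_of_le_one_right (abs_nonneg _) (hb j)
      _ ≤ 1 := hrow i
  · rw [hG, Matrix.mulVec_sub, ← Matrix.mulVec_mulVec, ← hc]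
    ring_nf
end
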